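/- arXiv:1010.0384 — 4 statements merged into one kernel-verified Lean document; each statement's English description precedes it below -/
import Mathlib

section
/- Let m ≡ 0 (mod 4) and let p be a prime with m/4 < p ≤ m/2. Let W be the set of vectors in {-1,1}^m with zero coordinate sum and a = m - 4p. If Q ⊆ W is a set such that (x,y) ≠ a for all x, y ∈ Q, then |Q| ≤ C(m, p) (the binomial coefficient m choose p). -/
set_option linter.unusedSectionVars false
set_option maxHeartbeats 1000000

open Finset Submodule

open Finset

lemma fw_count (m : ℕ) (Q : Finset (Fin m → ℤ))
    (hQW : ∀ x ∈ Q, (∀ i, x i = 1 ∨ x i = -1) ∧ ∑ i, x i = 0) :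
    Q.card ≤ m.choose (m / 2) := by
  classical
  set φ : (Fin m → ℤ) → Finset (Fin m) := fun x => Finset.univ.filter (fun i => x i = 1) with hφ
  have hinj : Set.InjOn φ Q := by
    intro x hx y hy hxy
    funext i
    have hxi := (hQW x hx).1 i
    have hyi := (hQW y hy).1 i
    by_cases h1 : x i = 1
    · have h2 : i ∈ φ x := by simp [hφ, h1]
      rw [hxy] at h2
      simp [hφ] at h2
      rw [h1, h2]
    · have hx1 : x i = -1 := hxi.resolve_left h1
      have h2 : i ∉ φ x := by simp [hφ, h1]
      rw [hxy] at h2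
      simp [hφ] at h2
      rw [hx1, hyi.resolve_left h2]
  have hcard : ∀ x ∈ Q, (φ x).card = m / 2 := by
    intro x hx
    have h1 := (hQW x hx).1
    have h2 := (hQW x hx).2
    have hsplit : (0 : ℤ) = ∑ i ∈ Finset.univ.filter (fun i => x i = 1), x i
        + ∑ i ∈ Finset.univ.filter (fun i => ¬ x i = 1), x i := by
      rw [← h2, Finset.sum_filter_add_sum_filter_not]
    have e1 : ∑ i ∈ Finset.univ.filter (fun i => x i = 1), x i = ((φ x).card : ℤ) := by
      rw [Finset.sum_congr rfl (fun i hi => (Finset.mem_filter.1 hi).2)]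
      simp [hφ]
    have e2 : ∑ i ∈ Finset.univ.filter (fun i => ¬ x i = 1), x i
        = -((Finset.univ.filter (fun i => ¬ x i = 1)).card : ℤ) := by
      rw [Finset.sum_congr rfl (fun i hi => (h1 i).resolve_left (Finset.mem_filter.1 hi).2)]
      simp
    have hc : (φ x).card + (Finset.univ.filter (fun i => ¬ x i = 1)).card = m := by
      rw [hφ]
      simpa using Finset.card_filter_add_card_filter_not
        (s := (Finset.univ : Finset (Fin m))) (p := fun i => x i = 1)
    rw [e1, e2] at hsplit
    omega
  calc Q.card = (Q.image φ).card := (Finset.card_image_of_injOn hinj).symm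
    _ ≤ (Finset.univ.powersetCard (m/2)).card := by
        apply Finset.card_le_card
        intro S hS
        rcases Finset.mem_image.1 hS with ⟨x, hx, rfl⟩
        rw [Finset.mem_powersetCard_univ]
        exact hcard x hx
    _ = m.choose (m/2) := by simp [Finset.card_powersetCard]

open Finset

lemma fw_dot (m : ℕ) (x y : Fin m → ℤ)
    (hx : ∀ i, x i = 1 ∨ x i = -1) (hy : ∀ i, y i = 1 ∨ y i = -1)
    (hxs : ∑ i, x i = 0) (hys : ∑ i, y i = 0) :
    ∃ K : ℤ, (∑ i, x i * y i) = m - 4 * K ∧ 0 ≤ K ∧ 2 * K ≤ m ∧ (K = 0 → x = y) := by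
  have ht : ∀ i : Fin m, x i - y i = 0 ∨ x i - y i = 2 ∨ x i - y i = -2 := by
    intro i; rcases hx i with h | h <;> rcases hy i with h' | h' <;> rw [h, h'] <;> norm_num
  have h8 : (8:ℤ) ∣ ∑ i, ((x i - y i)^2 - 2*(x i - y i)) := by
    apply Finset.dvd_sum
    intro i _
    rcases ht i with h | h | h <;> rw [h] <;> norm_num
  have hdiff : ∑ i, (x i - y i) = 0 := by
    rw [Finset.sum_sub_distrib, hxs, hys]; ring
  have h8' : (8:ℤ) ∣ ∑ i, (x i - y i)^2 := by
    have := Finset.sum_sub_distrib (s := (Finset.univ : Finset (Fin m)))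
      (f := fun i => (x i - y i)^2) (g := fun i => 2*(x i - y i))
    rw [this] at h8
    rw [← Finset.mul_sum, hdiff, mul_zero, sub_zero] at h8
    exact h8
  obtain ⟨K, hK⟩ := h8'
  refine ⟨K, ?_, ?_, ?_, ?_⟩
  · have h2 : 2 * (∑ i, x i * y i) = 2 * m - 8 * K := by
      rw [Finset.mul_sum]
      have : ∀ i : Fin m, 2 * (x i * y i) = 2 - (x i - y i)^2 := by
        intro i; rcases hx i with h | h <;> rcases hy i with h' | h' <;> rw [h, h'] <;> ring
      rw [Finset.sum_congr rfl (fun i _ => this i), Finset.sum_sub_distrib, ← hK]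
      simp [mul_comm]
    linarith
  · have : (0:ℤ) ≤ 8 * K := by
      rw [← hK]; exact Finset.sum_nonneg (fun i _ => sq_nonneg _)
    linarith
  · have : ∑ i, (x i - y i)^2 ≤ ∑ i : Fin m, (4:ℤ) := by
      apply Finset.sum_le_sum
      intro i _
      rcases ht i with h | h | h <;> rw [h] <;> norm_num
    simp only [Finset.sum_const, Finset.card_univ, Fintype.card_fin, smul_eq_mul, nsmul_eq_mul] at this
    rw [hK] at this
    linarith
  · intro hK0
    rw [hK0, mul_zero] at hK
    have hz : ∀ i ∈ Finset.univ, (x i - y i)^2 = 0 := by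
      apply (Finset.sum_eq_zero_iff_of_nonneg (fun i _ => sq_nonneg _)).1 hK
    funext i
    have := hz i (Finset.mem_univ i)
    have : x i - y i = 0 := by
      nlinarith [this]
    linarith


open Finset Submodule

section
variable {m : ℕ} {ι : Type*} [Fintype ι]

def fwz (w : ι → Fin m → ℤ) (i : Fin m) (y : ι) : ℚ := ((w y i : ℚ) + 1) / 2

def fwg (w : ι → Fin m → ℤ) (S : Finset (Fin m)) (y : ι) : ℚ := ∏ i ∈ S, fwz w i y

lemma fwz01 {w : ι → Fin m → ℤ} (h1 : ∀ y i, w y i = 1 ∨ w y i = -1) (i : Fin m) (y : ι) :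
    fwz w i y = 0 ∨ fwz w i y = 1 := by
  rcases h1 y i with h | h
  · right; simp [fwz, h]
  · left; rw [fwz, h]; norm_num

lemma fwzsum {w : ι → Fin m → ℤ} (h2 : ∀ y, ∑ i, w y i = 0) (y : ι) :
    ∑ i, fwz w i y = (m : ℚ) / 2 := by
  unfold fwz
  rw [← Finset.sum_div, Finset.sum_add_distrib]
  have : ∑ i, ((w y i : ℚ)) = ((∑ i, w y i : ℤ) : ℚ) := by push_cast; rfl
  rw [this, h2 y]
  simp

lemma fwzg {w : ι → Fin m → ℤ} (h1 : ∀ y i, w y i = 1 ∨ w y i = -1)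
    (i : Fin m) (S : Finset (Fin m)) (y : ι) :
    fwz w i y * fwg w S y = fwg w (insert i S) y := by
  classical
  by_cases hi : i ∈ S
  · rw [Finset.insert_eq_self.2 hi]
    rcases fwz01 h1 i y with h | h
    · rw [h, zero_mul, fwg, Finset.prod_eq_zero hi h]
    · rw [h, one_mul]
  · show fwz w i y * fwg w S y = ∏ j ∈ insert i S, fwz w j y
    rw [Finset.prod_insert hi]; rfl

lemma fw_mul_mem {w : ι → Fin m → ℤ} (h1 : ∀ y i, w y i = 1 ∨ w y i = -1)
    (d : ℕ) (a : Fin m → ℚ) (c : ℚ) (h : ι → ℚ)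
    (hh : h ∈ span ℚ (fwg w '' {S | S.card ≤ d})) :
    (fun y => (∑ i, a i * fwz w i y + c) * h y) ∈ span ℚ (fwg w '' {S | S.card ≤ d + 1}) := by
  classical
  set lin : ι → ℚ := fun y => ∑ i, a i * fwz w i y + c with hlin
  show (LinearMap.mulLeft ℚ lin) h ∈ span ℚ (fwg w '' {S | S.card ≤ d + 1})
  have hmem : (LinearMap.mulLeft ℚ lin) h ∈
      Submodule.map (LinearMap.mulLeft ℚ lin) (span ℚ (fwg w '' {S | S.card ≤ d})) :=
    Submodule.mem_map_of_mem hh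
  rw [Submodule.map_span] at hmem
  refine span_le.2 ?_ hmem
  rintro u ⟨v, ⟨S, hS, rfl⟩, rfl⟩
  have hEq : (LinearMap.mulLeft ℚ lin) (fwg w S) =
      (∑ i ∈ Finset.univ, a i • fwg w (insert i S)) + c • fwg w S := by
    funext y
    have hL : (LinearMap.mulLeft ℚ lin) (fwg w S) y = lin y * fwg w S y := rfl
    rw [hL, hlin]
    simp only [Pi.add_apply, Finset.sum_apply, Pi.smul_apply, smul_eq_mul]
    rw [add_mul, Finset.sum_mul]
    congr 1
    refine Finset.sum_congr rfl (fun i _ => ?_)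
    rw [mul_assoc, fwzg h1]
  rw [hEq]
  refine add_mem (sum_mem (fun i _ => smul_mem _ _ (subset_span ⟨insert i S, ?_, rfl⟩)))
    (smul_mem _ _ (subset_span ⟨S, ?_, rfl⟩))
  · exact le_trans (Finset.card_insert_le _ _) (Nat.succ_le_succ hS)
  · exact le_trans hS (Nat.le_succ d)

lemma fw_prod_mem {w : ι → Fin m → ℤ} (h1 : ∀ y i, w y i = 1 ∨ w y i = -1)
    (v : Fin m → ℤ) (hv : ∑ i, v i = 0) (t : Finset ℕ) :
    (fun y => ∏ j ∈ t, (((∑ i, v i * w y i : ℤ) : ℚ) - ((m:ℚ) - 4 * j))) ∈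
      span ℚ (fwg w '' {S | S.card ≤ t.card}) := by
  classical
  induction t using Finset.induction_on with
  | empty =>
      simp only [Finset.prod_empty, Finset.card_empty]
      have he : (fun _ : ι => (1:ℚ)) = fwg w ∅ := by funext y; simp [fwg]
      rw [he]
      exact subset_span ⟨∅, by simp, rfl⟩
  | @insert j t hj ih =>
      have hfac : ∀ y, ((∑ i, v i * w y i : ℤ) : ℚ) = ∑ i, (2 * (v i : ℚ)) * fwz w i y := by
        intro y
        have hterm : ∀ i : Fin m, (2 * (v i : ℚ)) * fwz w i y
            = (v i : ℚ) * (w y i : ℚ) + (v i : ℚ) := by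
          intro i; unfold fwz; ring
        rw [Finset.sum_congr rfl (fun i _ => hterm i), Finset.sum_add_distrib]
        have hv' : ∑ i, ((v i : ℚ)) = ((∑ i, v i : ℤ) : ℚ) := by push_cast; rfl
        rw [hv', hv]
        push_cast
        simp
      have heq : (fun y => ∏ j' ∈ insert j t, (((∑ i, v i * w y i : ℤ) : ℚ) - ((m:ℚ) - 4 * j')))
          = (fun y => (∑ i, (2 * (v i : ℚ)) * fwz w i y + (-((m:ℚ) - 4 * j)))
              * ∏ j' ∈ t, (((∑ i, v i * w y i : ℤ) : ℚ) - ((m:ℚ) - 4 * j'))) := by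
        funext y
        rw [Finset.prod_insert hj, ← hfac y]
        ring
      rw [heq, Finset.card_insert_of_notMem hj]
      exact fw_mul_mem h1 t.card _ _ _ ih

lemma fw_lift {w : ι → Fin m → ℤ} (h1 : ∀ y i, w y i = 1 ∨ w y i = -1)
    (h2 : ∀ y, ∑ i, w y i = 0) (d : ℕ) (hdm : 2 * d ≤ m) :
    ∀ n (S : Finset (Fin m)), S.card + n = d →
      fwg w S ∈ span ℚ (fwg w '' {T | T.card = d}) := by
  classical
  intro n
  induction n with
  | zero => intro S hS; exact subset_span ⟨S, by simpa using hS, rfl⟩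
  | succ n ih =>
      intro S hS
      have hcard : 2 * S.card + 2 ≤ m := by omega
      set cst : ℚ := (m:ℚ)/2 - S.card with hcst
      have hc0 : cst ≠ 0 := by
        have hq : (2 * S.card + 2 : ℚ) ≤ (m:ℚ) := by exact_mod_cast hcard
        rw [hcst]
        intro hz
        rw [sub_eq_zero] at hz
        rw [← hz] at hq
        linarith
      have hid : cst • fwg w S = ∑ i ∈ Sᶜ, fwg w (insert i S) := by
        funext y
        simp only [Pi.smul_apply, smul_eq_mul, Finset.sum_apply]
        by_cases hall : ∀ i ∈ S, fwz w i y = 1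
        · have hgs : fwg w S y = 1 := Finset.prod_eq_one (fun i hi => hall i hi)
          have hins : ∀ i ∈ Sᶜ, fwg w (insert i S) y = fwz w i y := by
            intro i hi
            rw [← fwzg h1, hgs, mul_one]
          rw [hgs, mul_one, Finset.sum_congr rfl hins]
          have hS1 : ∑ i ∈ S, fwz w i y = (S.card : ℚ) := by
            rw [Finset.sum_congr rfl hall]; simp
          have hsplit : ∑ i ∈ S, fwz w i y + ∑ i ∈ Sᶜ, fwz w i y = ∑ i, fwz w i y :=
            Finset.sum_add_sum_compl S _
          rw [fwzsum h2 y, hS1] at hsplit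
          rw [hcst]
          linarith
        · push_neg at hall
          obtain ⟨i0, hi0S, hi0⟩ := hall
          have hz0 : fwz w i0 y = 0 := (fwz01 h1 i0 y).resolve_right hi0
          have hgs : fwg w S y = 0 := Finset.prod_eq_zero hi0S hz0
          have hzero : ∀ i ∈ Sᶜ, fwg w (insert i S) y = 0 := by
            intro i _
            exact Finset.prod_eq_zero (Finset.mem_insert_of_mem hi0S) hz0
          rw [hgs, mul_zero, Finset.sum_congr rfl hzero, Finset.sum_const, smul_zero]
      have hmem : cst • fwg w S ∈ span ℚ (fwg w '' {T | T.card = d}) := by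
        rw [hid]
        refine sum_mem (fun i hi => ?_)
        have hiS : i ∉ S := by simpa using hi
        apply ih
        rw [Finset.card_insert_of_notMem hiS]; omega
      exact (Submodule.smul_mem_iff _ hc0).1 hmem

end

lemma fw_indep {ι : Type*} [Fintype ι] [DecidableEq ι] (p : ℕ) [Fact p.Prime]
    (F : ι → ι → ℤ)
    (hdiag : ∀ x, ((F x x : ℤ) : ZMod p) ≠ 0)
    (hoff : ∀ x y, x ≠ y → ((F x y : ℤ) : ZMod p) = 0) :
    LinearIndependent ℚ (fun x => (fun y => (F x y : ℚ))) := by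
  have key : (Matrix.of F).det ≠ 0 := by
    intro hdet
    have h1 : ((Matrix.of F).map (Int.cast : ℤ → ZMod p)).det = 0 := by
      rw [show ((Matrix.of F).map (Int.cast : ℤ → ZMod p))
          = (Matrix.of F).map (Int.castRingHom (ZMod p) : ℤ → ZMod p) from rfl,
        ← RingHom.mapMatrix_apply, ← RingHom.map_det, hdet]
      simp
    have h2 : (Matrix.of F).map (Int.cast : ℤ → ZMod p)
        = Matrix.diagonal (fun x => ((F x x : ℤ) : ZMod p)) := by
      ext x y
      by_cases hxy : x = y
      · subst hxy; simp [Matrix.map_apply, Matrix.diagonal_apply_eq]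
      · rw [Matrix.diagonal_apply_ne _ hxy]
        exact hoff x y hxy
    rw [h2, Matrix.det_diagonal] at h1
    exact (Finset.prod_ne_zero_iff.2 (fun x _ => hdiag x)) h1
  have hq : IsUnit (Matrix.of (fun x y => (F x y : ℚ))).det := by
    rw [isUnit_iff_ne_zero]
    have : (Matrix.of (fun x y => (F x y : ℚ)))
        = (Matrix.of F).map (Int.castRingHom ℚ : ℤ → ℚ) := rfl
    rw [this, ← RingHom.mapMatrix_apply, ← RingHom.map_det]
    simpa using key
  exact Matrix.linearIndependent_rows_iff_isUnit.2 ((Matrix.isUnit_iff_isUnit_det _).2 hq)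

/-- Frankl–Wilson type bound: if Q is a set of vectors in {-1,1}^m with zero
coordinate sum and no two of its elements have scalar product a = m - 4p
(p prime, m/4 < p ≤ m/2, 4 | m), then |Q| ≤ C(m,p). -/
theorem stmt_3 (m p : ℕ) (hm : 4 ∣ m) (hp : p.Prime)
    (hp1 : m < 4 * p) (hp2 : 2 * p ≤ m)
    (Q : Finset (Fin m → ℤ))
    (hQW : ∀ x ∈ Q, (∀ i, x i = 1 ∨ x i = -1) ∧ ∑ i, x i = 0)
    (hQ : ∀ x ∈ Q, ∀ y ∈ Q, ∑ i, x i * y i ≠ (m : ℤ) - 4 * p) :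
    Q.card ≤ m.choose p := by
  classical
  rcases hp.eq_two_or_odd' with hp2' | hpodd
  · subst hp2'
    have hm4 : m = 4 := by omega
    subst hm4
    have h := fw_count 4 Q hQW
    norm_num at h ⊢
    exact h
  haveI : Fact p.Prime := ⟨hp⟩
  haveI : NeZero p := ⟨hp.pos.ne'⟩
  have hp2le : 2 ≤ p := hp.two_le
  have hp3 : 3 ≤ p := by rcases hpodd with ⟨k, hk⟩; omega
  set d : ℕ := p - 1 with hd
  set ι := {x // x ∈ Q} with hι
  set w : ι → Fin m → ℤ := fun x => (x : Fin m → ℤ) with hw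
  have h1 : ∀ (y : ι) i, w y i = 1 ∨ w y i = -1 := fun y i => (hQW y.1 y.2).1 i
  have h2 : ∀ (y : ι), ∑ i, w y i = 0 := fun y => (hQW y.1 y.2).2
  set F : ι → ι → ℤ :=
    fun x y => ∏ j ∈ Finset.Icc 1 d, ((∑ i, w x i * w y i) - ((m:ℤ) - 4 * j)) with hF
  -- diagonal entries are nonzero mod p
  have hdotself : ∀ x : ι, (∑ i, w x i * w x i) = (m:ℤ) := by
    intro x
    have hone : ∀ i : Fin m, w x i * w x i = 1 := by
      intro i; rcases h1 x i with h | h <;> rw [h] <;> norm_num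
    rw [Finset.sum_congr rfl (fun i _ => hone i)]
    simp
  have hdiag : ∀ x : ι, ((F x x : ℤ) : ZMod p) ≠ 0 := by
    intro x
    have hFval : F x x = ∏ j ∈ Finset.Icc 1 d, (4 * (j:ℤ)) := by
      rw [hF]
      refine Finset.prod_congr rfl (fun j _ => ?_)
      rw [hdotself x]; ring
    rw [hFval]
    push_cast
    rw [Finset.prod_ne_zero_iff]
    intro j hj
    intro hzero
    have hzero' : ((4 * j : ℕ) : ZMod p) = 0 := by push_cast; exact hzero
    rw [ZMod.natCast_eq_zero_iff] at hzero'
    rcases (Nat.Prime.dvd_mul hp).1 hzero' with h4 | hj'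
    · have hple : p ≤ 4 := Nat.le_of_dvd (by norm_num) h4
      interval_cases p
      · exact absurd h4 (by norm_num)
      · exact absurd hp (by norm_num)
    · have hjle := Finset.mem_Icc.1 hj
      have := Nat.le_of_dvd (by omega) hj'
      omega
  -- off-diagonal entries are zero mod p
  have hoff : ∀ x y : ι, x ≠ y → ((F x y : ℤ) : ZMod p) = 0 := by
    intro x y hxy
    obtain ⟨K, hK, hK0, hK2, hKeq⟩ :=
      fw_dot m (w x) (w y) (fun i => h1 x i) (fun i => h1 y i) (h2 x) (h2 y)
    have hKne : K ≠ 0 := fun h => hxy (Subtype.ext (hKeq h))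
    set k : ℕ := K.toNat with hk
    have hKk : K = (k : ℤ) := (Int.toNat_of_nonneg hK0).symm
    have hk1 : 1 ≤ k := by omega
    have hkm : 2 * k ≤ m := by omega
    have hkp : k ≠ p := by
      intro h
      apply hQ x.1 x.2 y.1 y.2
      rw [show (∑ i, x.1 i * y.1 i) = (∑ i, w x i * w y i) from rfl, hK, hKk, h]
    have hk2p : k < 2 * p := by omega
    set j : ℕ := if k < p then k else k - p with hj
    have hjmem : j ∈ Finset.Icc 1 d := by
      rw [Finset.mem_Icc, hj]
      split_ifs with h <;> omega
    have hFval : F x y = ∏ j' ∈ Finset.Icc 1 d, (4 * ((j':ℤ) - K)) := by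
      rw [hF]
      refine Finset.prod_congr rfl (fun j' _ => ?_)
      rw [hK]; ring
    rw [hFval]
    push_cast
    apply Finset.prod_eq_zero hjmem
    have hcast : ((j : ZMod p)) = ((k : ZMod p)) := by
      rw [hj]
      split_ifs with h
      · rfl
      · rw [Nat.cast_sub (by omega : p ≤ k), ZMod.natCast_self, sub_zero]
    rw [hKk]
    push_cast
    rw [hcast]
    ring
  -- linear independence
  have hli : LinearIndependent ℚ (fun x => (fun y => (F x y : ℚ))) := fw_indep p F hdiag hoff
  -- span membership
  have hdm : 2 * d ≤ m := by omega
  have hspan : ∀ x : ι, (fun y => (F x y : ℚ)) ∈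
      span ℚ (fwg w '' {T : Finset (Fin m) | T.card = d}) := by
    intro x
    have hx1 := fw_prod_mem h1 (w x) (h2 x) (Finset.Icc 1 d)
    have hfx : (fun y => (F x y : ℚ))
        = (fun y => ∏ j ∈ Finset.Icc 1 d,
            (((∑ i, w x i * w y i : ℤ) : ℚ) - ((m:ℚ) - 4 * j))) := by
      funext y
      rw [hF]
      push_cast
      rfl
    rw [hfx]
    have hcard : (Finset.Icc 1 d).card = d := by rw [Nat.card_Icc]; omega
    rw [hcard] at hx1
    refine span_le.2 ?_ hx1
    rintro u ⟨S, hS, rfl⟩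
    exact fw_lift h1 h2 d hdm (d - S.card) S (by have h' := hS; simp only [Set.mem_setOf_eq, Nat.card_Icc] at h'; omega)
  -- assemble
  set s : Finset (ι → ℚ) := (Finset.univ.powersetCard d).image (fwg w) with hs
  have hss : (fwg w '' {T : Finset (Fin m) | T.card = d}) ⊆ (s : Set (ι → ℚ)) := by
    rintro u ⟨T, hT, rfl⟩
    exact Finset.mem_coe.2 (Finset.mem_image.2 ⟨T, Finset.mem_powersetCard_univ.2 hT, rfl⟩)
  have hspan' : ∀ x : ι, (fun y => (F x y : ℚ)) ∈ span ℚ (s : Set (ι → ℚ)) :=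
    fun x => span_mono hss (hspan x)
  have hli2 : LinearIndependent ℚ
      (fun x : ι => (⟨(fun y => (F x y : ℚ)), hspan' x⟩ : span ℚ (s : Set (ι → ℚ)))) := by
    apply LinearIndependent.of_comp (span ℚ (s : Set (ι → ℚ))).subtype
    exact hli
  have hcardle : Fintype.card ι ≤ Module.finrank ℚ (span ℚ (s : Set (ι → ℚ))) :=
    hli2.fintype_card_le_finrank
  have hfr : Module.finrank ℚ (span ℚ (s : Set (ι → ℚ))) ≤ s.card :=
    finrank_span_finset_le_card s
  have hsc : s.card ≤ m.choose d := by
    refine le_trans (Finset.card_image_le) ?_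
    rw [Finset.card_powersetCard]
    simp
  have hmono : m.choose d ≤ m.choose p := by
    have hlt : d < m / 2 := by omega
    have hstep := Nat.choose_le_succ_of_lt_half_left (r := d) (n := m) hlt
    have hd1 : d + 1 = p := by omega
    rwa [hd1] at hstep
  have hQcard : Fintype.card ι = Q.card := Fintype.card_coe Q
  omega
end

section
/- Let m ≡ 0 (mod 4), p prime with m/4 < p ≤ m/2, and a = m - 4p. Let G be the graph whose vertices are the vectors in {-1,1}^m with zero coordinate sum, with x adjacent to y iff (x,y) = a. Then the chromatic number of G is at least C(m, m/2) / C(m, p). -/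
open Finset


namespace FW4

variable {m : ℕ}

/-- Indicator monomial function on `k`-subsets. -/
def ee (p m k : ℕ) (S : Finset (Fin m)) : {B : Finset (Fin m) // B.card = k} → ZMod p :=
  fun B => if S ⊆ B.1 then 1 else 0

lemma ee_mul (p k : ℕ) (S T : Finset (Fin m)) :
    ee p m k S * ee p m k T = ee p m k (S ∪ T) := by
  funext B
  simp only [ee, Pi.mul_apply, Finset.union_subset_iff]
  by_cases h1 : S ⊆ B.1 <;> by_cases h2 : T ⊆ B.1 <;> simp [h1, h2]

/-- The function `B ↦ |A ∩ B| mod p`. -/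
def chi (p m k : ℕ) (A : Finset (Fin m)) : {B : Finset (Fin m) // B.card = k} → ZMod p :=
  fun B => ((A ∩ B.1).card : ZMod p)

lemma chi_eq_sum (p k : ℕ) (A : Finset (Fin m)) :
    chi p m k A = ∑ i ∈ A, ee p m k {i} := by
  funext B
  simp only [chi, Finset.sum_apply, ee, Finset.singleton_subset_iff]
  rw [Finset.sum_boole]
  have : A.filter (· ∈ B.1) = A ∩ B.1 := by ext i; simp
  rw [this]

lemma swallow (p k : ℕ) (S : Finset (Fin m)) :
    ∑ i ∈ Sᶜ, ee p m k (insert i S) = ((k - S.card : ℕ) : ZMod p) • ee p m k S := by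
  funext B
  simp only [Finset.sum_apply, Pi.smul_apply, ee]
  by_cases hSB : S ⊆ B.1
  · rw [if_pos hSB]
    have : ∀ i ∈ Sᶜ, (if insert i S ⊆ B.1 then (1 : ZMod p) else 0)
        = if i ∈ B.1 then 1 else 0 := by
      intro i _
      simp [Finset.insert_subset_iff, hSB]
    rw [Finset.sum_congr rfl this, Finset.sum_boole]
    have : Sᶜ.filter (· ∈ B.1) = B.1 \ S := by
      ext i; simp [Finset.mem_sdiff, and_comm]
    rw [this, Finset.card_sdiff_of_subset hSB, B.2, smul_eq_mul, mul_one]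
  · rw [if_neg hSB, smul_zero]
    apply Finset.sum_eq_zero
    intro i _
    rw [if_neg]
    intro h
    exact hSB (Finset.Subset.trans (Finset.subset_insert i S) h)

/-- Span of monomials of degree exactly `p-1` or exactly `k-p`. -/
def WW (p m k : ℕ) : Submodule (ZMod p) ({B : Finset (Fin m) // B.card = k} → ZMod p) :=
  Submodule.span (ZMod p) (ee p m k '' {S | S.card = p - 1 ∨ S.card = k - p})

/-- Span of monomials of degree at most `j`. -/
def low (p m k j : ℕ) : Submodule (ZMod p) ({B : Finset (Fin m) // B.card = k} → ZMod p) :=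
  Submodule.span (ZMod p) (ee p m k '' {S | S.card ≤ j})

lemma lift (p k : ℕ) (hp : p.Prime) (hpk : p ≤ k) (hk : k ≤ 2 * p - 2) :
    ∀ t, ∀ S : Finset (Fin m), S.card + t = p - 1 → ee p m k S ∈ WW p m k := by
  haveI : Fact p.Prime := ⟨hp⟩
  have hp2 := hp.two_le
  intro t
  induction t with
  | zero =>
    intro S hS
    exact Submodule.subset_span ⟨S, Or.inl (by omega), rfl⟩
  | succ t ih =>
    intro S hS
    by_cases hd : S.card = k - p
    · exact Submodule.subset_span ⟨S, Or.inr hd, rfl⟩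
    · have hne : ((k - S.card : ℕ) : ZMod p) ≠ 0 := by
        rw [Ne, ZMod.natCast_eq_zero_iff]
        rintro ⟨c, hc⟩
        have h1 : 0 < k - S.card := by omega
        have h2 : k - S.card < 2 * p := by omega
        have hc2 : c < 2 := by
          by_contra hcon
          push_neg at hcon
          have : 2 * p ≤ p * c := by
            calc 2 * p = p * 2 := by ring
            _ ≤ p * c := Nat.mul_le_mul_left _ hcon
          omega
        have hc1 : 0 < c := by
          rcases Nat.eq_zero_or_pos c with h | h
          · subst h; rw [mul_zero] at hc; omega
          · exact h
        have hcc : c = 1 := by omega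
        subst hcc
        omega
      have hrw : ee p m k S
          = ((k - S.card : ℕ) : ZMod p)⁻¹ • ∑ i ∈ Sᶜ, ee p m k (insert i S) := by
        rw [swallow, smul_smul, inv_mul_cancel₀ hne, one_smul]
      rw [hrw]
      apply Submodule.smul_mem
      apply Submodule.sum_mem
      intro i hi
      apply ih
      rw [Finset.card_insert_of_notMem (Finset.mem_compl.mp hi)]
      omega

lemma mul_low (p k j : ℕ) (A : Finset (Fin m)) (c : ZMod p)
    (g : {B : Finset (Fin m) // B.card = k} → ZMod p) (hg : g ∈ low p m k j) :
    (chi p m k A - Function.const _ c) * g ∈ low p m k (j + 1) := by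
  set L := LinearMap.mulLeft (ZMod p) (chi p m k A - Function.const _ c) with hL
  have hmap : Submodule.map L (low p m k j) ≤ low p m k (j + 1) := by
    rw [low, Submodule.map_span, Submodule.span_le]
    rintro _ ⟨_, ⟨S, hS, rfl⟩, rfl⟩
    have hLv : L (ee p m k S)
        = (∑ i ∈ A, ee p m k (insert i S)) - c • ee p m k S := by
      rw [hL, LinearMap.mulLeft_apply, sub_mul]
      congr 1
      · rw [chi_eq_sum, Finset.sum_mul]
        refine Finset.sum_congr rfl fun i _ => ?_
        rw [ee_mul, ← Finset.insert_eq]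
    refine SetLike.mem_coe.mpr ?_
    rw [hLv]
    apply Submodule.sub_mem
    · refine Submodule.sum_mem _ fun i _ => Submodule.subset_span
        ⟨insert i S, ?_, rfl⟩
      exact le_trans (Finset.card_insert_le i S) (by simpa using hS)
    · exact Submodule.smul_mem _ _ (Submodule.subset_span ⟨S, le_trans hS (Nat.le_succ j), rfl⟩)
  exact hmap ⟨g, hg, rfl⟩

lemma one_mem_low (p k j : ℕ) : (1 : {B : Finset (Fin m) // B.card = k} → ZMod p) ∈ low p m k j := by
  have : (1 : {B : Finset (Fin m) // B.card = k} → ZMod p) = ee p m k ∅ := by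
    funext B; simp [ee]
  rw [this]
  exact Submodule.subset_span ⟨∅, by simp, rfl⟩

lemma prod_low (p k : ℕ) (A : Finset (Fin m)) (t : Finset (ZMod p)) :
    (∏ c ∈ t, (chi p m k A - Function.const _ c)) ∈ low p m k t.card := by
  classical
  induction t using Finset.induction with
  | empty => simpa using one_mem_low p k 0
  | @insert a s h ih =>
    rw [Finset.prod_insert h, Finset.card_insert_of_notMem h]
    exact mul_low p k s.card A a _ ih


/-- The Frankl–Wilson polynomial function of a set `A`. -/
def fA (p m k : ℕ) [NeZero p] (A : Finset (Fin m)) : {B : Finset (Fin m) // B.card = k} → ZMod p :=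
  ∏ c ∈ Finset.univ.erase ((k : ZMod p)), (chi p m k A - Function.const _ c)

lemma low_le_WW (p k : ℕ) (hp : p.Prime) (hpk : p ≤ k) (hk : k ≤ 2 * p - 2) :
    low p m k (p - 1) ≤ WW p m k := by
  rw [low, Submodule.span_le]
  rintro _ ⟨S, hS, rfl⟩
  exact lift p k hp hpk hk (p - 1 - S.card) S (by simp at hS; omega)

lemma fA_mem (p k : ℕ) [NeZero p] (hp : p.Prime) (hpk : p ≤ k) (hk : k ≤ 2 * p - 2)
    (A : Finset (Fin m)) : fA p m k A ∈ WW p m k := by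
  haveI : Fact p.Prime := ⟨hp⟩
  apply low_le_WW p k hp hpk hk
  have hcard : (Finset.univ.erase ((k : ZMod p))).card = p - 1 := by
    rw [Finset.card_erase_of_mem (Finset.mem_univ _), Finset.card_univ, ZMod.card]
  rw [fA, ← hcard]
  exact prod_low p k A _

set_option maxHeartbeats 1000000 in
lemma fw_core (p m k : ℕ) (hp : p.Prime) (hpk : p ≤ k) (hk : k ≤ 2 * p - 2)
    (F : Finset (Finset (Fin m))) (hcard : ∀ A ∈ F, A.card = k)
    (hint : ∀ A ∈ F, ∀ B ∈ F, A ≠ B → (A ∩ B).card ≠ k - p) :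
    F.card ≤ m.choose (p - 1) + m.choose (k - p) := by
  classical
  haveI : Fact p.Prime := ⟨hp⟩
  haveI : NeZero p := ⟨hp.pos.ne'⟩
  have hp2 := hp.two_le
  -- the ZMod p cast of intersection sizes of distinct members avoids k
  have hc_ne : ∀ A ∈ F, ∀ B ∈ F, A ≠ B →
      (((A ∩ B).card : ZMod p)) ≠ ((k : ℕ) : ZMod p) := by
    intro A hA B hB hAB h
    have hsub : A ∩ B ⊆ A := Finset.inter_subset_left
    have hle : (A ∩ B).card ≤ k := (hcard A hA) ▸ Finset.card_le_card hsub
    have hmod : (A ∩ B).card ≡ k [MOD p] := (ZMod.natCast_eq_natCast_iff _ _ _).mp h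
    have hdvd : p ∣ k - (A ∩ B).card := (Nat.modEq_iff_dvd' hle).mp hmod
    obtain ⟨c, hc⟩ := hdvd
    have hc2 : c < 2 := by
      by_contra hcon
      push_neg at hcon
      have : 2 * p ≤ p * c := by
        calc 2 * p = p * 2 := by ring
        _ ≤ p * c := Nat.mul_le_mul_left _ hcon
      omega
    have hAcard := hcard A hA
    have hBcard := hcard B hB
    interval_cases c
    · -- c = 0 : A ∩ B = A = B
      rw [mul_zero] at hc
      have hAB' : (A ∩ B).card = k := by omega
      have h1 : A ∩ B = A := Finset.eq_of_subset_of_card_le hsub (by omega)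
      have h2 : A ∩ B = B := Finset.eq_of_subset_of_card_le Finset.inter_subset_right (by omega)
      exact hAB (h1 ▸ h2)
    · rw [mul_one] at hc
      exact hint A hA B hB hAB (by omega)
  -- diagonal values are nonzero
  have hdiag : ∀ A, ∀ hA : A ∈ F, fA p m k A ⟨A, hcard A hA⟩ ≠ 0 := by
    intro A hA
    have hval : fA p m k A ⟨A, hcard A hA⟩
        = ∏ c ∈ Finset.univ.erase ((k : ZMod p)), (((k:ℕ) : ZMod p) - c) := by
      rw [fA, Finset.prod_apply]
      refine Finset.prod_congr rfl fun c _ => ?_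
      simp [chi, Function.const, Finset.inter_self, hcard A hA]
    rw [hval]
    apply Finset.prod_ne_zero_iff.mpr
    intro c hc
    exact sub_ne_zero_of_ne (Ne.symm (Finset.ne_of_mem_erase hc))
  -- off-diagonal values are zero
  have hoff : ∀ A, ∀ hA : A ∈ F, ∀ B, ∀ hB : B ∈ F, A ≠ B → fA p m k A ⟨B, hcard B hB⟩ = 0 := by
    intro A hA B hB hAB
    rw [fA, Finset.prod_apply]
    apply Finset.prod_eq_zero (i := (((A ∩ B).card : ℕ) : ZMod p))
    · exact Finset.mem_erase.mpr ⟨hc_ne A hA B hB hAB, Finset.mem_univ _⟩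
    · simp [chi, Function.const, sub_self]
  -- linear independence
  set v : {A // A ∈ F} → ({B : Finset (Fin m) // B.card = k} → ZMod p) :=
    fun A => fA p m k A.1 with hv
  have hindep : LinearIndependent (ZMod p) v := by
    rw [linearIndependent_iff']
    intro s g hsum A hA
    have hpt := congrFun hsum ⟨A.1, hcard A.1 A.2⟩
    rw [Finset.sum_apply] at hpt
    have hz : ∀ B ∈ s, B ≠ A → (g B • v B) ⟨A.1, hcard A.1 A.2⟩ = 0 := by
      intro B _ hBA
      have h0 : v B ⟨A.1, hcard A.1 A.2⟩ = 0 :=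
        hoff B.1 B.2 A.1 A.2 (fun h => hBA (Subtype.ext h))
      rw [Pi.smul_apply, h0, smul_zero]
    rw [Finset.sum_eq_single A hz (fun h => absurd hA h), Pi.smul_apply, smul_eq_mul,
      Pi.zero_apply] at hpt
    exact (mul_eq_zero.mp hpt).resolve_right (hdiag A.1 A.2)
  -- span is small
  set T : Finset ({B : Finset (Fin m) // B.card = k} → ZMod p) :=
    ((Finset.univ.powersetCard (p - 1) ∪ Finset.univ.powersetCard (k - p))).image
      (ee p m k) with hT
  have hWT : WW p m k = Submodule.span (ZMod p) (T : Set _) := by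
    rw [WW]
    congr 1
    ext f
    constructor
    · rintro ⟨S, hS, rfl⟩
      refine Finset.mem_coe.mpr (Finset.mem_image.mpr ⟨S, Finset.mem_union.mpr ?_, rfl⟩)
      rcases hS with h | h
      · exact Or.inl (Finset.mem_powersetCard.mpr ⟨Finset.subset_univ S, h⟩)
      · exact Or.inr (Finset.mem_powersetCard.mpr ⟨Finset.subset_univ S, h⟩)
    · intro hf
      obtain ⟨S, hS, rfl⟩ := Finset.mem_image.mp (Finset.mem_coe.mp hf)
      rcases Finset.mem_union.mp hS with h | h
      · exact ⟨S, Or.inl (Finset.mem_powersetCard.mp h).2, rfl⟩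
      · exact ⟨S, Or.inr (Finset.mem_powersetCard.mp h).2, rfl⟩
  have hmemT : ∀ A : {A // A ∈ F}, v A ∈ Submodule.span (ZMod p) (T : Set _) := by
    intro A
    rw [← hWT]
    exact fA_mem p k hp hpk hk A.1
  have hle : Set.range v ≤ ((Submodule.span (ZMod p) (T : Set ({B : Finset (Fin m) // B.card = k} → ZMod p)) : Submodule (ZMod p) _) : Set ({B : Finset (Fin m) // B.card = k} → ZMod p)) := by
    rintro _ ⟨A, rfl⟩
    exact hmemT A
  have hcard2 := linearIndependent_le_span' v hindep (T : Set _) hle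
  rw [Cardinal.mk_fintype, Nat.cast_le] at hcard2
  simp only [Fintype.card_coe, Finset.coe_sort_coe] at hcard2
  have hTcard : T.card ≤ m.choose (p - 1) + m.choose (k - p) := by
    calc T.card ≤ (Finset.univ.powersetCard (p - 1) ∪ Finset.univ.powersetCard (k - p)).card :=
        Finset.card_image_le
    _ ≤ (Finset.univ.powersetCard (p - 1) : Finset (Finset (Fin m))).card
        + (Finset.univ.powersetCard (k - p) : Finset (Finset (Fin m))).card :=
        Finset.card_union_le _ _
    _ = m.choose (p - 1) + m.choose (k - p) := by
        rw [Finset.card_powersetCard, Finset.card_powersetCard, Finset.card_univ,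
          Fintype.card_fin]
  omega


lemma comb_ineq (m p k : ℕ) (hp2 : 2 ≤ p) (hpk : p ≤ k) (hk : k ≤ 2 * p - 2)
    (hm : m = 2 * k) :
    m.choose (p - 1) + m.choose (k - p) ≤ m.choose p := by
  set d := k - p with hd
  have hkd : k = p + d := by omega
  have key1 : m.choose p * p = m.choose (p - 1) * (p + 2 * d + 1) := by
    have h := Nat.choose_succ_right_eq m (p - 1)
    have h1 : p - 1 + 1 = p := by omega
    rw [h1] at h
    rw [h]
    congr 1
    omega
  have key2 : m.choose (d + 1) * (d + 1) = m.choose d * (2 * p + d) := by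
    have h := Nat.choose_succ_right_eq m d
    rw [h]
    congr 1
    omega
  have mono : ∀ j, d + 1 ≤ j → j ≤ p - 1 → m.choose (d + 1) ≤ m.choose j := by
    intro j
    induction j with
    | zero => omega
    | succ j ih =>
      intro h1 h2
      rcases Nat.lt_or_ge (d + 1) (j + 1) with h | h
      · have hj1 : d + 1 ≤ j := by omega
        have hj2 : j ≤ p - 1 := by omega
        refine le_trans (ih hj1 hj2) (Nat.choose_le_succ_of_lt_half_left ?_)
        have : m / 2 = k := by omega
        omega
      · have : d + 1 = j + 1 := by omega
        rw [this]
  have mono' : m.choose (d + 1) ≤ m.choose (p - 1) := mono (p - 1) (by omega) le_rfl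
  -- main: p * m.choose d ≤ (2 * d + 1) * m.choose (p - 1)
  have main : p * m.choose d ≤ (2 * d + 1) * m.choose (p - 1) := by
    have h1 : p * m.choose d * (d + 1) ≤ (2 * d + 1) * m.choose (p - 1) * (d + 1) := by
      calc p * m.choose d * (d + 1) ≤ (2 * d + 1) * (2 * p + d) * m.choose d := by
            have hfac : p * (d + 1) ≤ (2 * d + 1) * (2 * p + d) := by nlinarith
            calc p * m.choose d * (d + 1) = (p * (d + 1)) * m.choose d := by ring
            _ ≤ ((2 * d + 1) * (2 * p + d)) * m.choose d := Nat.mul_le_mul_right _ hfac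
            _ = (2 * d + 1) * (2 * p + d) * m.choose d := by ring
      _ = (2 * d + 1) * (m.choose d * (2 * p + d)) := by ring
      _ = (2 * d + 1) * (m.choose (d + 1) * (d + 1)) := by rw [key2]
      _ = (2 * d + 1) * m.choose (d + 1) * (d + 1) := by ring
      _ ≤ (2 * d + 1) * m.choose (p - 1) * (d + 1) := by
            exact Nat.mul_le_mul_right _ (Nat.mul_le_mul_left _ mono')
    exact Nat.le_of_mul_le_mul_right h1 (by omega)
  have final : p * (m.choose (p - 1) + m.choose d) ≤ p * m.choose p := by
    calc p * (m.choose (p - 1) + m.choose d) = p * m.choose (p - 1) + p * m.choose d := by ring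
    _ ≤ p * m.choose (p - 1) + (2 * d + 1) * m.choose (p - 1) := by omega
    _ = m.choose (p - 1) * (p + 2 * d + 1) := by ring
    _ = m.choose p * p := key1.symm
    _ = p * m.choose p := by ring
  exact Nat.le_of_mul_le_mul_left final (by omega)


/-- The vertex type. -/
abbrev V (m : ℕ) := {x : Fin m → ℤ // (∀ i, x i = 1 ∨ x i = -1) ∧ ∑ i, x i = 0}

/-- The set of coordinates equal to `1`. -/
def supp {m : ℕ} (x : V m) : Finset (Fin m) := Finset.univ.filter (fun i => x.1 i = 1)

lemma supp_card {m : ℕ} (k : ℕ) (hm : m = 2 * k) (x : V m) : (supp x).card = k := by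
  classical
  have h := x.2.2
  rw [← Finset.sum_filter_add_sum_filter_not Finset.univ (fun i => x.1 i = 1) x.1] at h
  have h1 : ∑ i ∈ Finset.univ.filter (fun i => x.1 i = 1), x.1 i = ((supp x).card : ℤ) := by
    rw [Finset.sum_congr rfl (fun i hi => (Finset.mem_filter.mp hi).2), Finset.sum_const, supp]
    simp
  have h2 : ∑ i ∈ Finset.univ.filter (fun i => ¬ x.1 i = 1), x.1 i
      = -(((Finset.univ.filter (fun i => ¬ x.1 i = 1)).card : ℤ)) := by
    have hterm : ∀ i ∈ Finset.univ.filter (fun i => ¬ x.1 i = 1), x.1 i = -1 := by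
      intro i hi
      rcases x.2.1 i with h' | h'
      · exact absurd h' (Finset.mem_filter.mp hi).2
      · exact h'
    rw [Finset.sum_congr rfl hterm, Finset.sum_const]
    simp
  rw [h1, h2] at h
  have h3 := Finset.card_filter_add_card_filter_not
    (s := (Finset.univ : Finset (Fin m))) (p := fun i => x.1 i = 1)
  rw [Finset.card_univ, Fintype.card_fin] at h3
  have : (supp x).card = (Finset.univ.filter (fun i => x.1 i = 1)).card := rfl
  omega

lemma supp_inj {m : ℕ} : Function.Injective (supp (m := m)) := by
  intro x y h
  apply Subtype.ext; funext i
  have hx' : i ∈ supp x ↔ x.1 i = 1 := by simp [supp]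
  have hy' : i ∈ supp y ↔ y.1 i = 1 := by simp [supp]
  rcases x.2.1 i with h1 | h1 <;> rcases y.2.1 i with h2 | h2
  · rw [h1, h2]
  · exfalso
    have : i ∈ supp y := h ▸ hx'.mpr h1
    rw [hy', h2] at this
    norm_num at this
  · exfalso
    have : i ∈ supp x := h.symm ▸ hy'.mpr h2
    rw [hx', h1] at this
    norm_num at this
  · rw [h1, h2]

lemma inner_eq {m : ℕ} (k : ℕ) (hm : m = 2 * k) (x y : V m) :
    ∑ i, x.1 i * y.1 i = 4 * ((supp x ∩ supp y).card : ℤ) - m := by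
  classical
  have hmem : ∀ (z : V m) (i : Fin m), z.1 i = 2 * (if i ∈ supp z then (1:ℤ) else 0) - 1 := by
    intro z i
    by_cases h : i ∈ supp z
    · rw [if_pos h, (Finset.mem_filter.mp h).2]
      norm_num
    · rw [if_neg h]
      have hz : z.1 i = -1 := by
        rcases z.2.1 i with h' | h'
        · exact absurd (Finset.mem_filter.mpr ⟨Finset.mem_univ i, h'⟩) h
        · exact h'
      rw [hz]; norm_num
  have step1 : ∑ i, x.1 i * y.1 i
      = ∑ i, (4 * (if i ∈ supp x ∩ supp y then (1:ℤ) else 0)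
          - 2 * (if i ∈ supp x then (1:ℤ) else 0)
          - 2 * (if i ∈ supp y then (1:ℤ) else 0) + 1) := by
    refine Finset.sum_congr rfl fun i _ => ?_
    rw [hmem x i, hmem y i]
    by_cases h1 : i ∈ supp x <;> by_cases h2 : i ∈ supp y <;>
      simp [h1, h2, Finset.mem_inter] <;> ring
  rw [step1]
  rw [Finset.sum_add_distrib, Finset.sum_sub_distrib, Finset.sum_sub_distrib,
    ← Finset.mul_sum, ← Finset.mul_sum, ← Finset.mul_sum,
    Finset.sum_ite_mem, Finset.sum_ite_mem, Finset.sum_ite_mem,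
    Finset.univ_inter, Finset.univ_inter, Finset.univ_inter,
    Finset.sum_const, Finset.sum_const, Finset.sum_const, Finset.sum_const,
    supp_card k hm x, supp_card k hm y, Finset.card_univ, Fintype.card_fin]
  push_cast
  ring_nf
  omega

end FW4

/-- The graph on vectors in {-1,1}^m with zero coordinate sum, adjacency
(x,y) = a = m - 4p, has chromatic number at least C(m, m/2)/C(m, p). -/
theorem stmt_4 (m p : ℕ) (hm : 4 ∣ m) (hp : p.Prime)
    (hp1 : m < 4 * p) (hp2 : 2 * p ≤ m)
    (G : SimpleGraph {x : Fin m → ℤ // (∀ i, x i = 1 ∨ x i = -1) ∧ ∑ i, x i = 0})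
    (hG : ∀ x y, G.Adj x y ↔ x ≠ y ∧ ∑ i, x.1 i * y.1 i = (m : ℤ) - 4 * p) :
    (m.choose (m / 2) : ℕ∞) ≤ (m.choose p : ℕ∞) * G.chromaticNumber := by
  classical
  obtain ⟨q, hq⟩ := hm
  have hp2' := hp.two_le
  set k := m / 2 with hkdef
  have hm2 : m = 2 * k := by omega
  have hpk : p ≤ k := by omega
  have hk2 : k ≤ 2 * p - 2 := by omega
  -- the equivalence with k-subsets
  let fwd : FW4.V m → {B : Finset (Fin m) // B.card = k} :=
    fun x => ⟨FW4.supp x, FW4.supp_card k hm2 x⟩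
  let bwd : {B : Finset (Fin m) // B.card = k} → FW4.V m := fun B =>
    ⟨fun i => if i ∈ B.1 then 1 else -1,
     fun i => by by_cases h : i ∈ B.1 <;> simp [h],
     by
      have hterm : ∀ i ∈ Finset.univ, (if i ∈ B.1 then (1:ℤ) else -1)
          = 2 * (if i ∈ B.1 then (1:ℤ) else 0) - 1 := by
        intro i _; by_cases h : i ∈ B.1 <;> simp [h]
      rw [Finset.sum_congr rfl hterm, Finset.sum_sub_distrib, ← Finset.mul_sum,
        Finset.sum_ite_mem, Finset.univ_inter, Finset.sum_const, Finset.sum_const,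
        Finset.card_univ, Fintype.card_fin, B.2]
      simp only [nsmul_eq_mul, mul_one]
      push_cast
      omega⟩
  have linv : ∀ x, bwd (fwd x) = x := by
    intro x
    apply Subtype.ext; funext i
    show (if i ∈ FW4.supp x then (1:ℤ) else -1) = x.1 i
    by_cases h : x.1 i = 1
    · rw [if_pos (by simp [FW4.supp, h]), h]
    · rw [if_neg (by simp [FW4.supp, h])]
      rcases x.2.1 i with h1 | h1
      · exact absurd h1 h
      · rw [h1]
  have rinv : ∀ B, fwd (bwd B) = B := by
    intro B
    apply Subtype.ext
    show FW4.supp (bwd B) = B.1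
    ext i
    by_cases h : i ∈ B.1 <;> simp [FW4.supp, bwd, h]
  let eqv : FW4.V m ≃ {B : Finset (Fin m) // B.card = k} := ⟨fwd, bwd, linv, rinv⟩
  haveI : Fintype (FW4.V m) := Fintype.ofEquiv _ eqv.symm
  have hcardV : Fintype.card (FW4.V m) = m.choose k := by
    have h1 := Fintype.card_congr eqv
    have h2 := Fintype.card_finset_len (α := Fin m) k
    rw [Fintype.card_fin] at h2
    rw [h1, h2]
  have hcol : G.Colorable (ENat.toNat G.chromaticNumber) := G.colorable_chromaticNumber_of_fintype
  set n := ENat.toNat G.chromaticNumber with hn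
  obtain ⟨C⟩ := hcol
  have hfib : ∀ j : Fin n, ((Finset.univ : Finset (FW4.V m)).filter (fun x => C x = j)).card
      ≤ m.choose p := by
    intro j
    set Fj := ((Finset.univ : Finset (FW4.V m)).filter (fun x => C x = j)).image FW4.supp
      with hFj
    have hcardFj : Fj.card = ((Finset.univ : Finset (FW4.V m)).filter (fun x => C x = j)).card :=
      Finset.card_image_of_injective _ FW4.supp_inj
    have hcards : ∀ A ∈ Fj, A.card = k := by
      rintro A hA
      obtain ⟨x, -, rfl⟩ := Finset.mem_image.mp hA
      exact FW4.supp_card k hm2 x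
    have hints : ∀ A ∈ Fj, ∀ B ∈ Fj, A ≠ B → (A ∩ B).card ≠ k - p := by
      intro A hA B hB hAB hc
      obtain ⟨x, hx, rfl⟩ := Finset.mem_image.mp hA
      obtain ⟨y, hy, rfl⟩ := Finset.mem_image.mp hB
      have hxy : x ≠ y := fun h => hAB (by rw [h])
      have hadj : G.Adj x y := by
        rw [hG]
        refine ⟨hxy, ?_⟩
        rw [FW4.inner_eq k hm2 x y, hc]
        have hkp : ((k - p : ℕ) : ℤ) = (k : ℤ) - p := by push_cast [hpk]; ring
        have hmz : (m : ℤ) = 2 * (k : ℤ) := by exact_mod_cast congrArg (Nat.cast (R := ℤ)) hm2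
        rw [hkp, hmz]
        ring
      have hval := C.valid hadj
      rw [(Finset.mem_filter.mp hx).2, (Finset.mem_filter.mp hy).2] at hval
      exact hval rfl
    have hb := FW4.fw_core p m k hp hpk hk2 Fj hcards hints
    have hci := FW4.comb_ineq m p k hp2' hpk hk2 hm2
    rw [← hcardFj]
    exact le_trans hb hci
  have hcount : m.choose k ≤ n * m.choose p := by
    rw [← hcardV, ← Finset.card_univ,
      Finset.card_eq_sum_card_fiberwise (f := fun x => C x) (t := Finset.univ)
        (fun x _ => Finset.mem_univ _)]
    calc ∑ j : Fin n, ((Finset.univ : Finset (FW4.V m)).filter (fun x => C x = j)).card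
        ≤ ∑ _j : Fin n, m.choose p := Finset.sum_le_sum fun j _ => hfib j
    _ = n * m.choose p := by
        rw [Finset.sum_const, Finset.card_univ, Fintype.card_fin, smul_eq_mul]
  have htop : G.chromaticNumber ≠ ⊤ :=
    SimpleGraph.chromaticNumber_ne_top_iff_exists.mpr ⟨_, G.colorable_of_fintype⟩
  have hχ : G.chromaticNumber = (n : ℕ∞) := (ENat.coe_toNat htop).symm
  rw [hχ, ← Nat.cast_mul, Nat.cast_le]
  calc m.choose (m / 2) = m.choose k := by rw [hkdef]
  _ ≤ n * m.choose p := hcount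
  _ = m.choose p * n := mul_comm _ _
end

section
/- There exists n₀ such that for all even m ≥ n₀ and any integer p with m/4 < p ≤ m/2 - √(m · ln m / κ) for a fixed constant κ < 2, the ratio C(m, m/2) / C(m, p) exceeds m + 2. -/
open Finset Filter Real Topology

private lemma sum_odds (d : ℕ) : ∑ i ∈ Finset.range d, (2*(i:ℝ)+1) = (d:ℝ)^2 := by
  induction d with
  | zero => simp
  | succ n ih => rw [Finset.sum_range_succ, ih]; push_cast; ring

private lemma choose_prod (h : ℕ) : ∀ d, d ≤ h →
    (((2*h).choose h : ℕ) : ℝ) =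
      ((2*h).choose (h - d) : ℝ) *
        ∏ i ∈ Finset.range d, ((2*(h:ℝ)+1) + (2*(i:ℝ)+1)) / ((2*(h:ℝ)+1) - (2*(i:ℝ)+1)) := by
  intro d
  induction d with
  | zero => simp
  | succ n ih =>
    intro hd
    have hn : n ≤ h := Nat.le_of_succ_le hd
    have hnh : n < h := hd
    have hnat : (2*h).choose (h-n) * (h - n) = (2*h).choose (h - (n+1)) * (h + (n+1)) := by
      have e := Nat.choose_succ_right_eq (2*h) (h - (n+1))
      have e1 : h - (n+1) + 1 = h - n := by omega
      have e2 : 2*h - (h - (n+1)) = h + (n+1) := by omega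
      rw [e1, e2] at e
      exact e
    have hr : ((2*h).choose (h-n) : ℝ) * ((h:ℝ) - n) =
        ((2*h).choose (h-(n+1)) : ℝ) * ((h:ℝ) + (n+1)) := by
      have := congrArg (Nat.cast : ℕ → ℝ) hnat
      push_cast [Nat.cast_sub hn] at this
      convert this using 2 <;> push_cast <;> ring
    have hden : (0:ℝ) < (2*(h:ℝ)+1) - (2*(n:ℝ)+1) := by
      have : (n:ℝ) < h := by exact_mod_cast hnh
      linarith
    have key : ((2*h).choose (h-n) : ℝ) =
        ((2*h).choose (h-(n+1)) : ℝ) * (((2*(h:ℝ)+1) + (2*(n:ℝ)+1)) / ((2*(h:ℝ)+1) - (2*(n:ℝ)+1))) := by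
      rw [mul_div_assoc', eq_div_iff hden.ne']
      linear_combination 2 * hr
    rw [Finset.prod_range_succ, ih hn, key]
    ring

private lemma factor_lb (M t : ℝ) (ht : 0 < t) (htM : t < M) :
    Real.exp (2*(t/M) - (t/M)^2) ≤ (M + t) / (M - t) := by
  have hM : 0 < M := ht.trans htM
  set x := t / M with hxdef
  have hx0 : 0 < x := div_pos ht hM
  have hx1 : x < 1 := (div_lt_one hM).2 htM
  have h1 : Real.exp (x - x^2) ≤ 1 + x := by
    have e := Real.add_one_le_exp (x^2 - x)
    have hmul : Real.exp (x - x^2) * Real.exp (x^2 - x) = 1 := by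
      rw [← Real.exp_add]; norm_num
    nlinarith [Real.exp_pos (x - x^2), Real.exp_pos (x^2 - x), sq_nonneg x, mul_pos hx0 hx0]
  have h2 : Real.exp x ≤ 1 / (1 - x) := by
    have e := Real.add_one_le_exp (-x)
    have hmul : Real.exp x * Real.exp (-x) = 1 := by
      rw [← Real.exp_add]; norm_num
    rw [le_div_iff₀ (by linarith : (0:ℝ) < 1 - x)]
    nlinarith [Real.exp_pos x, Real.exp_pos (-x)]
  have h3 : Real.exp (2*x - x^2) ≤ (1+x) * (1/(1-x)) := by
    rw [show 2*x - x^2 = (x - x^2) + x by ring, Real.exp_add]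
    exact mul_le_mul h1 h2 (Real.exp_pos _).le (by linarith)
  have h4 : (1+x) * (1/(1-x)) = (M + t)/(M - t) := by
    have e1 : 1 + t/M = (M+t)/M := by field_simp
    have e2 : 1 - t/M = (M-t)/M := by field_simp
    rw [hxdef, e1, e2, one_div_div, div_mul_div_comm, mul_comm (M+t) M, mul_comm M (M-t)]
    rw [mul_comm (M-t) M]
    exact mul_div_mul_left _ _ hM.ne'
  linarith [h3, h4.le, h4.ge]

private lemma end_lemma (κ : ℝ) (hκ0 : 0 < κ) (hκ2 : κ < 2) :
    ∀ᶠ x : ℝ in atTop, ∀ D : ℝ, 0 ≤ D → x * Real.log x / κ ≤ D^2 → D ≤ x/4 →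
      Real.log (x+2) < 2*D^2/(x+1) - 2*D^3/(x+1)^2 := by
  have hc : 1 < 2/κ := (one_lt_div hκ0).2 hκ2
  set c := 2/κ with hcdef
  set ε := min (c-1) (1/2) / 2 with hεdef
  have hε0 : 0 < ε := by
    apply div_pos _ two_pos
    exact lt_min (by linarith) (by norm_num)
  have hε1 : ε < c - 1 := by
    have : min (c-1) (1/2) ≤ c - 1 := min_le_left _ _
    rw [hεdef]; linarith
  have hε2 : ε < 1/2 := by
    have : min (c-1) (1/2) ≤ 1/2 := min_le_right _ _
    rw [hεdef]; linarith
  have tlog : Tendsto Real.log atTop atTop := Real.tendsto_log_atTop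
  have tinv : Tendsto (fun x:ℝ => (x+1)⁻¹) atTop (𝓝 0) :=
    tendsto_inv_atTop_zero.comp (tendsto_atTop_add_const_right _ 1 tendsto_id)
  have tfrac : Tendsto (fun x:ℝ => x/(x+1)) atTop (𝓝 1) := by
    have heq : (fun x:ℝ => x/(x+1)) =ᶠ[atTop] fun x => 1 - (x+1)⁻¹ := by
      filter_upwards [eventually_gt_atTop (0:ℝ)] with x hx
      field_simp; ring
    rw [tendsto_congr' heq]
    simpa using tendsto_const_nhds.sub tinv
  have tld : Tendsto (fun x:ℝ => Real.log x / x) atTop (𝓝 0) := by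
    simpa using Real.isLittleO_log_id_atTop.tendsto_div_nhds_zero
  have tsq : Tendsto (fun x:ℝ => Real.sqrt (Real.log x / x)) atTop (𝓝 0) := by
    have := (Real.continuous_sqrt.tendsto 0).comp tld
    simpa [Function.comp_def] using this
  have tA : Tendsto (fun x:ℝ => c * (x/(x+1)) * (1 - Real.sqrt (Real.log x / x))) atTop (𝓝 c) := by
    have h := ((tendsto_const_nhds (x := c) (f := atTop)).mul tfrac).mul
      ((tendsto_const_nhds (x := (1:ℝ)) (f := atTop)).sub tsq)
    simpa using h
  have tB : Tendsto (fun x:ℝ => 3/2 * (x/(x+1))) atTop (𝓝 (3/2)) := by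
    have h := (tendsto_const_nhds (x := (3/2:ℝ)) (f := atTop)).mul tfrac
    simpa using h
  filter_upwards [eventually_ge_atTop (16:ℝ),
    tlog.eventually_ge_atTop (max 1 (1/ε)),
    tA.eventually (eventually_gt_nhds (show 1+ε < c by linarith)),
    tB.eventually (eventually_gt_nhds (show 1+ε < 3/2 by linarith))] with x hx16 hlog hA hB
  intro D hD0 hD2 hD4
  set L := Real.log x with hLdef
  have hL1 : 1 ≤ L := le_trans (le_max_left _ _) hlog
  have hL0 : (0:ℝ) ≤ L := by linarith
  have hLε : 1 ≤ ε * L := by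
    have h1 : 1/ε ≤ L := le_trans (le_max_right _ _) hlog
    calc (1:ℝ) = ε * (1/ε) := by field_simp
    _ ≤ ε * L := mul_le_mul_of_nonneg_left h1 hε0.le
  have hx0 : (0:ℝ) < x := by linarith
  have hM : (0:ℝ) < x + 1 := by linarith
  have hc0 : (0:ℝ) < c := by linarith
  have hlog2 : Real.log (x+2) ≤ L + 2/x := by
    have hq : (0:ℝ) < (x+2)/x := by positivity
    have h := Real.log_le_sub_one_of_pos hq
    rw [Real.log_div (by linarith) (ne_of_gt hx0)] at h
    have he : (x+2)/x - 1 = 2/x := by field_simp; ring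
    rw [he] at h
    rw [hLdef]
    linarith
  have hD2' : c * x * L ≤ 2 * D^2 := by
    have h2 : 2 * (x * L / κ) ≤ 2 * D^2 := by linarith
    calc c * x * L = 2 * (x * L / κ) := by rw [hcdef]; field_simp
    _ ≤ 2 * D^2 := h2
  have key : (1+ε) * L ≤ 2*D^2/(x+1) - 2*D^3/(x+1)^2 := by
    have hfact : 2*D^2/(x+1) - 2*D^3/(x+1)^2 = (2*D^2/(x+1)) * (1 - D/(x+1)) := by
      field_simp
    rw [hfact]
    have hnum : c * x * L / (x+1) ≤ 2*D^2/(x+1) := by gcongr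
    by_cases hcase : D^2 ≤ x * L
    · -- D is small
      have hsq : Real.sqrt (L / x) = Real.sqrt (x*L) / x := by
        rw [show L/x = (x*L)/x^2 by field_simp,
          Real.sqrt_div (mul_nonneg hx0.le hL0), Real.sqrt_sq hx0.le]
      have hDle : D ≤ Real.sqrt (x*L) := by
        rw [show D = Real.sqrt (D^2) by rw [Real.sqrt_sq hD0]]
        exact Real.sqrt_le_sqrt hcase
      have hDM : D/(x+1) ≤ Real.sqrt (L/x) := by
        rw [hsq]
        calc D/(x+1) ≤ D/x := by gcongr <;> linarith
        _ ≤ Real.sqrt (x*L)/x := by gcongr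
      have h1ms : 0 ≤ 1 - Real.sqrt (L/x) := by
        by_contra hcon
        push_neg at hcon
        have hxp : 0 < c * (x/(x+1)) := by positivity
        nlinarith [hA]
      calc (1+ε)*L ≤ (c * (x/(x+1)) * (1 - Real.sqrt (L/x))) * L :=
            mul_le_mul_of_nonneg_right hA.le hL0
        _ = (c*x*L/(x+1)) * (1 - Real.sqrt (L/x)) := by ring
        _ ≤ (2*D^2/(x+1)) * (1 - D/(x+1)) := by
            apply mul_le_mul hnum (by linarith) h1ms (by positivity)
    · -- D is large
      push_neg at hcase
      have h34 : (3:ℝ)/4 ≤ 1 - D/(x+1) := by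
        have hq : D/(x+1) ≤ 1/4 := by
          rw [div_le_iff₀ hM]; linarith
        linarith
      have hnum2 : 2*(x*L)/(x+1) ≤ 2*D^2/(x+1) := by gcongr <;> linarith
      calc (1+ε)*L ≤ (3/2*(x/(x+1)))*L := mul_le_mul_of_nonneg_right hB.le hL0
        _ = (2*(x*L)/(x+1)) * (3/4) := by ring
        _ ≤ (2*D^2/(x+1)) * (3/4) := mul_le_mul_of_nonneg_right hnum2 (by norm_num)
        _ ≤ (2*D^2/(x+1)) * (1 - D/(x+1)) := mul_le_mul_of_nonneg_left h34 (by positivity)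
  have h2x : 2/x ≤ 1/8 := by
    rw [div_le_div_iff₀ hx0 (by norm_num)]; linarith
  calc Real.log (x+2) ≤ L + 2/x := hlog2
    _ < L + ε*L := by linarith
    _ = (1+ε)*L := by ring
    _ ≤ _ := key

/-- For fixed κ ∈ (0,2), there is n₀ such that for all even m ≥ n₀ and any
integer p with m/4 < p ≤ m/2 - √(m ln m / κ), we have
C(m, m/2)/C(m, p) > m + 2. -/
theorem stmt_7 (κ : ℝ) (hκ0 : 0 < κ) (hκ2 : κ < 2) :
    ∃ n₀ : ℕ, ∀ m : ℕ, n₀ ≤ m → 2 ∣ m → ∀ p : ℕ,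
      (m : ℝ) / 4 < p → (p : ℝ) ≤ (m : ℝ) / 2 - Real.sqrt (m * Real.log m / κ) →
      (m + 2 : ℝ) < (m.choose (m / 2) : ℝ) / (m.choose p : ℝ) := by
  have hev : ∀ᶠ m : ℕ in atTop, ∀ D : ℝ, 0 ≤ D → (m:ℝ) * Real.log m / κ ≤ D^2 → D ≤ (m:ℝ)/4 →
      Real.log ((m:ℝ)+2) < 2*D^2/((m:ℝ)+1) - 2*D^3/((m:ℝ)+1)^2 :=
    tendsto_natCast_atTop_atTop.eventually (end_lemma κ hκ0 hκ2)
  obtain ⟨n₀, hn₀⟩ := eventually_atTop.mp hev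
  refine ⟨max n₀ 1, ?_⟩
  intro m hm hdvd p hp1 hp2
  obtain ⟨h, rfl⟩ := hdvd
  have hm1 : 1 ≤ 2*h := le_trans (le_max_right _ _) hm
  have hh1 : 1 ≤ h := by omega
  have hmdiv : (2*h)/2 = h := by omega
  rw [hmdiv]
  have hcast : ((2*h:ℕ):ℝ) = 2*(h:ℝ) := by push_cast; ring
  have h1le : (1:ℝ) ≤ ((2*h:ℕ):ℝ) := by exact_mod_cast hm1
  have hsqnn := Real.sqrt_nonneg (((2*h:ℕ):ℝ) * Real.log ((2*h:ℕ):ℝ) / κ)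
  have hp_le : p ≤ h := by
    have hpr : (p:ℝ) ≤ (h:ℝ) := by
      have h2 : ((2*h:ℕ):ℝ)/2 = (h:ℝ) := by rw [hcast]; ring
      linarith [hp2]
    exact_mod_cast hpr
  set d := h - p with hddef
  have hdcast : (d:ℝ) = (h:ℝ) - (p:ℝ) := by
    rw [hddef]; push_cast [hp_le]; ring
  have ha : (0:ℝ) ≤ ((2*h:ℕ):ℝ) * Real.log ((2*h:ℕ):ℝ) / κ :=
    div_nonneg (mul_nonneg (by positivity) (Real.log_nonneg h1le)) hκ0.le
  have harg1 : ((2*h:ℕ):ℝ) * Real.log ((2*h:ℕ):ℝ) / κ ≤ (d:ℝ)^2 := by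
    have hdge : Real.sqrt (((2*h:ℕ):ℝ) * Real.log ((2*h:ℕ):ℝ) / κ) ≤ (d:ℝ) := by
      rw [hdcast]
      have h2 : ((2*h:ℕ):ℝ)/2 = (h:ℝ) := by rw [hcast]; ring
      linarith [hp2]
    nlinarith [Real.sq_sqrt ha, hsqnn, hdge]
  have harg2 : (d:ℝ) ≤ ((2*h:ℕ):ℝ)/4 := by
    rw [hdcast]
    have h2 : ((2*h:ℕ):ℝ) = 2*(h:ℝ) := hcast
    linarith [hp1]
  have hkey := hn₀ (2*h) (le_trans (le_max_left _ _) hm) (d:ℝ) (Nat.cast_nonneg d) harg1 harg2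
  have hprod := choose_prod h d (Nat.sub_le h p)
  have hdp : h - d = p := by omega
  rw [hdp] at hprod
  have hfac : ∀ i ∈ Finset.range d, Real.exp (2*((2*(i:ℝ)+1)/(2*(h:ℝ)+1)) - ((2*(i:ℝ)+1)/(2*(h:ℝ)+1))^2)
      ≤ ((2*(h:ℝ)+1) + (2*(i:ℝ)+1)) / ((2*(h:ℝ)+1) - (2*(i:ℝ)+1)) := by
    intro i hi
    have hid : i < d := Finset.mem_range.mp hi
    have hih : (i:ℝ) < (h:ℝ) := by exact_mod_cast lt_of_lt_of_le hid (Nat.sub_le h p)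
    exact factor_lb _ _ (by positivity) (by linarith)
  have hexp : Real.exp (∑ i ∈ Finset.range d, (2*((2*(i:ℝ)+1)/(2*(h:ℝ)+1)) - ((2*(i:ℝ)+1)/(2*(h:ℝ)+1))^2))
      ≤ ∏ i ∈ Finset.range d, ((2*(h:ℝ)+1) + (2*(i:ℝ)+1)) / ((2*(h:ℝ)+1) - (2*(i:ℝ)+1)) := by
    rw [Real.exp_sum]
    exact Finset.prod_le_prod (fun i _ => (Real.exp_pos _).le) hfac
  set M := 2*(h:ℝ)+1 with hMdef
  have hM0 : (0:ℝ) < M := by positivity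
  have hsum : 2*(d:ℝ)^2/M - 2*(d:ℝ)^3/M^2 ≤
      ∑ i ∈ Finset.range d, (2*((2*(i:ℝ)+1)/M) - ((2*(i:ℝ)+1)/M)^2) := by
    have hterm : ∀ i ∈ Finset.range d,
        2*(2*(i:ℝ)+1)/M - (2*(i:ℝ)+1)*(2*(d:ℝ))/M^2 ≤ 2*((2*(i:ℝ)+1)/M) - ((2*(i:ℝ)+1)/M)^2 := by
      intro i hi
      have hid : (i:ℝ) < (d:ℝ) := by exact_mod_cast Finset.mem_range.mp hi
      have h1 : ((2*(i:ℝ)+1)/M)^2 ≤ (2*(i:ℝ)+1)*(2*(d:ℝ))/M^2 := by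
        have hid1 : (i:ℝ) + 1 ≤ (d:ℝ) := by exact_mod_cast Finset.mem_range.mp hi
        rw [div_pow]
        gcongr
        nlinarith [Nat.cast_nonneg (α := ℝ) i]
      have h2 : 2*((2*(i:ℝ)+1)/M) = 2*(2*(i:ℝ)+1)/M := by ring
      linarith
    calc 2*(d:ℝ)^2/M - 2*(d:ℝ)^3/M^2
        = ∑ i ∈ Finset.range d, (2*(2*(i:ℝ)+1)/M - (2*(i:ℝ)+1)*(2*(d:ℝ))/M^2) := by
          rw [Finset.sum_sub_distrib]
          have s1 : ∑ i ∈ Finset.range d, 2*(2*(i:ℝ)+1)/M = 2*(d:ℝ)^2/M := by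
            rw [← Finset.sum_div, ← Finset.mul_sum, sum_odds]
          have s2 : ∑ i ∈ Finset.range d, (2*(i:ℝ)+1)*(2*(d:ℝ))/M^2 = 2*(d:ℝ)^3/M^2 := by
            rw [← Finset.sum_div, ← Finset.sum_mul, sum_odds]; ring
          rw [s1, s2]
      _ ≤ _ := Finset.sum_le_sum hterm
  have hMeq : ((2*h:ℕ):ℝ) + 1 = M := by rw [hMdef, hcast]
  rw [hMeq] at hkey
  have hpos : (0:ℝ) < ((2*h:ℕ):ℝ) + 2 := by positivity
  have hfinal : ((2*h:ℕ):ℝ) + 2 <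
      ∏ i ∈ Finset.range d, (M + (2*(i:ℝ)+1)) / (M - (2*(i:ℝ)+1)) := by
    calc ((2*h:ℕ):ℝ) + 2 = Real.exp (Real.log (((2*h:ℕ):ℝ)+2)) := (Real.exp_log hpos).symm
      _ < Real.exp (2*(d:ℝ)^2/M - 2*(d:ℝ)^3/M^2) := Real.exp_lt_exp.2 hkey
      _ ≤ Real.exp (∑ i ∈ Finset.range d, (2*((2*(i:ℝ)+1)/M) - ((2*(i:ℝ)+1)/M)^2)) :=
          Real.exp_le_exp.2 hsum
      _ ≤ _ := hexp
  have hcp : (0:ℝ) < ((2*h).choose p : ℝ) := by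
    exact_mod_cast Nat.choose_pos (by omega : p ≤ 2*h)
  rw [hprod, mul_div_cancel_left₀ _ hcp.ne']
  exact hfinal
end

section
/- Let f(x) be defined for x ≥ 0 by x + f(x) = min{p prime : p > x}. If there is a constant c₁ > 0 with f(x) ≤ c₁ ln x for all x ≥ 2, then there exists c₁' > 0 such that for all sufficiently large n and m = m(n) the largest multiple of 4 below n, and r_n ≥ 1/2 + c₁'·√(ln n / n), the smallest prime p exceeding m/(8r_n²) satisfies p < m/2 - √(m ln m / κ) for any fixed κ < 2. -/
def mOf (n : ℕ) : ℕ := 4 * ((n - 1) / 4)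

private lemma log_le_two_sqrt {x : ℝ} (hx : 0 < x) : Real.log x ≤ 2 * Real.sqrt x := by
  have h1 : Real.log (Real.sqrt x) ≤ Real.sqrt x - 1 :=
    Real.log_le_sub_one_of_pos (Real.sqrt_pos.mpr hx)
  have h2 : Real.log (Real.sqrt x) = Real.log x / 2 := Real.log_sqrt hx.le
  linarith

/-- arithmetic: M/(8r²) ≤ M/2 - M·cs when 0 ≤ cs ≤ 1/4 and r ≥ 1/2 + cs. -/
private lemma x_upper {M cs r : ℝ} (hM : 0 ≤ M) (hcs : 0 ≤ cs) (hcs4 : cs ≤ 1/4)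
    (hr : 1/2 + cs ≤ r) : M / (8 * r ^ 2) ≤ M / 2 - M * cs := by
  have hrpos : (0:ℝ) < r := by linarith
  have hr2 : 2 + 8 * cs ≤ 8 * r ^ 2 := by
    nlinarith [sq_nonneg (r - (1/2 + cs)), sq_nonneg cs]
  have h1 : M / (8 * r ^ 2) ≤ M / (2 + 8 * cs) :=
    div_le_div_of_nonneg_left hM (by linarith) hr2
  refine h1.trans ?_
  rw [div_le_iff₀ (by linarith)]
  nlinarith [mul_nonneg (mul_nonneg hM hcs) (by linarith : (0:ℝ) ≤ 1 - 4 * cs)]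

/-- √(M log M / κ) ≤ M/4 when M ≥ 1024/κ² and M ≥ 13. -/
private lemma sqrt_le_quarter {M κ : ℝ} (hκ : 0 < κ) (hM2 : 1024 / κ ^ 2 ≤ M)
    (hM13 : 13 ≤ M) : Real.sqrt (M * Real.log M / κ) ≤ M / 4 := by
  have hMpos : (0:ℝ) < M := by linarith
  rw [show M/4 = Real.sqrt ((M/4)^2) from (Real.sqrt_sq (by positivity)).symm]
  apply Real.sqrt_le_sqrt
  have hsqM : 32 / κ ≤ Real.sqrt M := by
    rw [show (32:ℝ)/κ = Real.sqrt (((32:ℝ)/κ)^2) from (Real.sqrt_sq (by positivity)).symm]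
    apply Real.sqrt_le_sqrt
    have : ((32:ℝ)/κ)^2 = 1024/κ^2 := by rw [div_pow]; norm_num
    linarith
  have hss : Real.sqrt M * Real.sqrt M = M := Real.mul_self_sqrt hMpos.le
  have h2 : 32 * Real.sqrt M ≤ κ * M := by
    have h := mul_le_mul_of_nonneg_right hsqM (Real.sqrt_nonneg M)
    rw [div_mul_eq_mul_div, hss] at h
    rw [div_le_iff₀ hκ] at h
    nlinarith [Real.sqrt_nonneg M]
  have hlog : Real.log M ≤ κ * M / 16 := by
    have h1 : Real.log M ≤ 2 * Real.sqrt M := log_le_two_sqrt hMpos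
    linarith
  rw [div_le_iff₀ hκ]
  nlinarith

/-- key slack: √2·B + c₁ log M < 3·B where B = √(M log M/(2κ)),
   provided M > 16κ²c₁⁴ + 1 and M ≥ 3. -/
private lemma slack {M κ c₁ : ℝ} (hκ : 0 < κ) (hc₁ : 0 < c₁)
    (hM3 : 13 ≤ M) (hMT : 16 * κ ^ 2 * c₁ ^ 4 + 13 ≤ M) :
    Real.sqrt 2 * Real.sqrt (M * Real.log M / (2 * κ)) + c₁ * Real.log M <
      3 * Real.sqrt (M * Real.log M / (2 * κ)) := by
  have hMpos : (0:ℝ) < M := by linarith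
  have hlogM : 0 < Real.log M := Real.log_pos (by linarith)
  set B : ℝ := Real.sqrt (M * Real.log M / (2 * κ)) with hB
  have hB0 : 0 ≤ B := Real.sqrt_nonneg _
  have hcB : c₁ * Real.log M < B := by
    rw [hB]
    rw [show c₁ * Real.log M
        = Real.sqrt ((c₁ * Real.log M)^2) from
        (Real.sqrt_sq (by positivity)).symm]
    apply Real.sqrt_lt_sqrt (by positivity)
    -- need c₁² log²M < M log M/(2κ) ⟸ 2κc₁² log M < M
    have hlt : 2 * κ * c₁ ^ 2 * Real.log M < M := by
      have h1 : Real.log M ≤ 2 * Real.sqrt M := log_le_two_sqrt hMpos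
      have hsM : 4 * κ * c₁ ^ 2 < Real.sqrt M := by
        have : (4 * κ * c₁ ^ 2)^2 < M := by nlinarith
        calc 4 * κ * c₁ ^ 2 = Real.sqrt ((4 * κ * c₁ ^ 2)^2) :=
              (Real.sqrt_sq (by positivity)).symm
          _ < Real.sqrt M := Real.sqrt_lt_sqrt (by positivity) this
      have hss : Real.sqrt M * Real.sqrt M = M := Real.mul_self_sqrt hMpos.le
      nlinarith [Real.sqrt_nonneg M]
    rw [lt_div_iff₀ (by positivity)]
    nlinarith
  have hsqrt2 : Real.sqrt 2 < 2 := by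
    nlinarith [Real.sq_sqrt (show (0:ℝ) ≤ 2 by norm_num), Real.sqrt_nonneg 2]
  nlinarith

/-- If the prime gap function f (with x + f(x) the least prime exceeding x)
satisfies f(x) ≤ c₁ ln x, then for any fixed κ ∈ (0,2) there is c₁' > 0 such
that for all large n, all r ≥ 1/2 + c₁'√(ln n / n) and m = m(n), the least
prime p exceeding m/(8r²) satisfies p < m/2 - √(m ln m / κ). -/
theorem stmt_14 (f : ℝ → ℝ)
    (hf : ∀ x : ℝ, 0 ≤ x →
      IsLeast {y : ℝ | ∃ q : ℕ, q.Prime ∧ (q : ℝ) = y ∧ x < y} (x + f x))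
    (c₁ : ℝ) (hc₁ : 0 < c₁) (hfc : ∀ x : ℝ, 2 ≤ x → f x ≤ c₁ * Real.log x)
    (κ : ℝ) (hκ0 : 0 < κ) (hκ2 : κ < 2) :
    ∃ c₁' : ℝ, 0 < c₁' ∧ ∃ n₀ : ℕ, ∀ n : ℕ, n₀ ≤ n → ∀ r : ℝ,
      1 / 2 + c₁' * Real.sqrt (Real.log n / n) ≤ r →
      ∀ p : ℕ, p.Prime → (mOf n : ℝ) / (8 * r ^ 2) < p →
        (∀ q : ℕ, q.Prime → (mOf n : ℝ) / (8 * r ^ 2) < q → p ≤ q) →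
        (p : ℝ) < (mOf n : ℝ) / 2 -
          Real.sqrt ((mOf n : ℝ) * Real.log (mOf n) / κ) := by
  have hκs : 0 < Real.sqrt κ := Real.sqrt_pos.mpr hκ0
  set C : ℝ := 82944 / κ ^ 2 + 1024 / κ ^ 2 + 16 * κ ^ 2 * c₁ ^ 4 + 17 with hCdef
  have hT1 : (0:ℝ) ≤ 82944 / κ ^ 2 := by positivity
  have hT2 : (0:ℝ) ≤ 1024 / κ ^ 2 := by positivity
  have hT3 : (0:ℝ) ≤ 16 * κ ^ 2 * c₁ ^ 4 := by positivity
  refine ⟨3 / Real.sqrt κ, by positivity, ⟨⌈C⌉₊, ?_⟩⟩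
  intro n hn r hr p hp hxp hmin
  have hnC : C ≤ (n : ℝ) := le_trans (Nat.le_ceil C) (by exact_mod_cast hn)
  have hn17 : (17:ℝ) ≤ n := by simp only [hCdef] at hnC; linarith
  have hn17' : 17 ≤ n := by exact_mod_cast hn17
  have hmeq : mOf n = 4 * ((n - 1) / 4) := rfl
  have hmn : n - 4 ≤ mOf n ∧ mOf n ≤ n - 1 := by
    have h1 := Nat.div_add_mod (n-1) 4
    have h2 : (n-1) % 4 < 4 := Nat.mod_lt _ (by norm_num)
    omega
  have hMge : (n : ℝ) - 4 ≤ (mOf n : ℝ) := by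
    have : ((n - 4 : ℕ) : ℝ) ≤ (mOf n : ℝ) := by exact_mod_cast hmn.1
    rwa [Nat.cast_sub (by omega)] at this
  have hMle : (mOf n : ℝ) ≤ (n : ℝ) := by
    exact_mod_cast Nat.le_of_lt (by omega : mOf n < n)
  set M : ℝ := (mOf n : ℝ) with hMdef
  clear_value M
  have hM13 : (13:ℝ) ≤ M := by linarith
  have hMpos : (0:ℝ) < M := by linarith
  have hMT2 : 1024 / κ ^ 2 ≤ M := by simp only [hCdef] at hnC; linarith
  have hMT3 : 16 * κ ^ 2 * c₁ ^ 4 + 13 ≤ M := by simp only [hCdef] at hnC; linarith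
  have hnT1 : 82944 / κ ^ 2 ≤ (n:ℝ) := by simp only [hCdef] at hnC; linarith
  have hlogM : 0 < Real.log M := Real.log_pos (by linarith)
  set s : ℝ := Real.sqrt (Real.log (n:ℝ) / (n:ℝ)) with hsdef
  have hs0 : 0 ≤ s := Real.sqrt_nonneg _
  have hnpos : (0:ℝ) < n := by linarith
  -- c₁' s ≤ 1/4
  have hsqrtn : 288 / κ ≤ Real.sqrt n := by
    rw [show (288:ℝ)/κ = Real.sqrt (((288:ℝ)/κ)^2) from (Real.sqrt_sq (by positivity)).symm]
    apply Real.sqrt_le_sqrt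
    have h : ((288:ℝ)/κ)^2 = 82944/κ^2 := by rw [div_pow]; norm_num
    linarith
  have hsle : 3 / Real.sqrt κ * s ≤ 1 / 4 := by
    have hln : Real.log n / n ≤ 2 / Real.sqrt n := by
      rw [div_le_div_iff₀ hnpos (by positivity)]
      calc Real.log n * Real.sqrt n ≤ (2 * Real.sqrt n) * Real.sqrt n :=
            mul_le_mul_of_nonneg_right (log_le_two_sqrt hnpos) (Real.sqrt_nonneg _)
        _ = 2 * n := by rw [mul_assoc, Real.mul_self_sqrt hnpos.le]
    have h2 : 2 / Real.sqrt n ≤ κ / 144 := by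
      rw [div_le_div_iff₀ (by positivity) (by norm_num)]
      calc 2 * 144 = (288 / κ) * κ := by rw [div_mul_cancel₀ _ (ne_of_gt hκ0)]; norm_num
        _ ≤ Real.sqrt n * κ := mul_le_mul_of_nonneg_right hsqrtn hκ0.le
        _ = κ * Real.sqrt n := mul_comm _ _
    have hsle' : s ≤ Real.sqrt κ / 12 := by
      have e : Real.sqrt (κ / 144) = Real.sqrt κ / 12 := by
        rw [Real.sqrt_div hκ0.le, show (144:ℝ) = 12^2 by norm_num,
          Real.sqrt_sq (by norm_num : (0:ℝ) ≤ 12)]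
      rw [← e]
      exact Real.sqrt_le_sqrt (le_trans hln h2)
    calc 3 / Real.sqrt κ * s ≤ 3 / Real.sqrt κ * (Real.sqrt κ / 12) :=
          mul_le_mul_of_nonneg_left hsle' (by positivity)
      _ = 1/4 := by field_simp; ring
  -- x bound
  have hx_le : M / (8 * r ^ 2) ≤ M / 2 - M * (3 / Real.sqrt κ * s) :=
    x_upper hMpos.le (by positivity) hsle hr
  have hcs0 : (0:ℝ) ≤ M * (3 / Real.sqrt κ * s) := by positivity
  have hxM2 : M / (8 * r ^ 2) ≤ M / 2 := by linarith
  -- √(M log M/κ) ≤ M/4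
  have hsqq : Real.sqrt (M * Real.log M / κ) ≤ M / 4 := sqrt_le_quarter hκ0 hMT2 hM13
  by_cases hx2 : M / (8 * r ^ 2) < 2
  · -- p ≤ 2
    have hp2 : p ≤ 2 := hmin 2 Nat.prime_two (by push_cast; linarith)
    have : (p : ℝ) ≤ 2 := by exact_mod_cast hp2
    linarith
  · push_neg at hx2
    set x : ℝ := M / (8 * r ^ 2) with hxdef
    clear_value x
    have hxpos : (0:ℝ) < x := by linarith
    -- p ≤ x + f x
    obtain ⟨⟨q, hq, hqe, hqgt⟩, -⟩ := hf x (by linarith)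
    have hpq : p ≤ q := hmin q hq (by rw [hqe]; exact hqgt)
    have hpfx : (p : ℝ) ≤ x + f x := by
      calc (p:ℝ) ≤ (q:ℝ) := by exact_mod_cast hpq
        _ = x + f x := hqe
    have hfx : f x ≤ c₁ * Real.log x := hfc x hx2
    have hlogx : Real.log x ≤ Real.log M := Real.log_le_log hxpos (by linarith)
    have hpx : (p : ℝ) ≤ x + c₁ * Real.log M := by
      have h := mul_le_mul_of_nonneg_left hlogx hc₁.le
      linarith
    -- M*s ≥ √(M log M /2)
    have hMs : Real.sqrt (M * Real.log M / 2) ≤ M * s := by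
      have e : M * s = Real.sqrt (M^2 * (Real.log n / n)) := by
        rw [hsdef, Real.sqrt_mul (sq_nonneg M), Real.sqrt_sq hMpos.le]
      rw [e]
      apply Real.sqrt_le_sqrt
      rw [show M ^ 2 * (Real.log n / n) = M ^ 2 * Real.log n / n by ring,
        div_le_div_iff₀ (by norm_num : (0:ℝ) < 2) hnpos]
      have hloglog : Real.log M ≤ Real.log n := Real.log_le_log hMpos hMle
      have h2M : (n:ℝ) ≤ 2 * M := by linarith
      have t1 : M * Real.log M * n ≤ M * Real.log M * (2 * M) :=
        mul_le_mul_of_nonneg_left h2M (by positivity)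
      have t2 : M ^ 2 * Real.log M ≤ M ^ 2 * Real.log n :=
        mul_le_mul_of_nonneg_left hloglog (by positivity)
      linarith
    -- convert: 3/√κ * (M*s) ≥ 3 * √(M log M/(2κ))
    have hconv : 3 * Real.sqrt (M * Real.log M / (2 * κ)) ≤ 3 / Real.sqrt κ * (M * s) := by
      have e : Real.sqrt (M * Real.log M / (2 * κ))
          = Real.sqrt (M * Real.log M / 2) / Real.sqrt κ := by
        rw [← Real.sqrt_div (by positivity) κ, div_div]
      rw [e, show 3 / Real.sqrt κ * (M * s) = 3 * (M * s / Real.sqrt κ) by ring]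
      gcongr
    -- √(M log M/κ) = √2 * √(M log M/(2κ))
    have hsplit : Real.sqrt (M * Real.log M / κ)
        = Real.sqrt 2 * Real.sqrt (M * Real.log M / (2 * κ)) := by
      rw [← Real.sqrt_mul (by norm_num : (0:ℝ) ≤ 2)]
      congr 1
      field_simp
    have hslack := slack hκ0 hc₁ hM13 hMT3
    have hfinal : x + c₁ * Real.log M < M / 2 - Real.sqrt (M * Real.log M / κ) := by
      rw [hsplit]
      have h1 : M * (3 / Real.sqrt κ * s) = 3 / Real.sqrt κ * (M * s) := by ring
      linarith [hx_le, hconv, hslack, h1 ▸ hx_le]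
    linarith
end
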